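/- Let â = lim_{R→∞} ess sup_{|x|>R} a(x) for a ∈ L^∞(ℝ^N), and let b be any weak* limit of translates τ_{x_n} a with |x_n| → ∞. Then ess sup b ≤ â. -/

import Mathlib

open MeasureTheory Filter Topology Metric

/-- If `â = lim_{R→∞} ess sup_{|x|>R} a` and `b` is a weak* limit of translates
`τ_{xₙ} a` with `|xₙ| → ∞`, then `ess sup b ≤ â`. -/
theorem stmt13 {N : ℕ} (a b : EuclideanSpace ℝ (Fin N) → ℝ)
    (ha : MemLp a ⊤ volume) (hb : MemLp b ⊤ volume) (aHat : ℝ)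
    (hahat : Tendsto
      (fun R : ℝ => essSup a (volume.restrict (ball (0 : EuclideanSpace ℝ (Fin N)) R)ᶜ))
      atTop (𝓝 aHat))
    (x : ℕ → EuclideanSpace ℝ (Fin N))
    (hx : Tendsto (fun n => ‖x n‖) atTop atTop)
    (hconv : ∀ φ : EuclideanSpace ℝ (Fin N) → ℝ, Integrable φ volume →
      Tendsto (fun n => ∫ y, a (y - x n) * φ y) atTop (𝓝 (∫ y, b y * φ y))) :
    essSup b volume ≤ aHat := by
  -- a.e. bounds on a and b
  obtain ⟨Ca, hCa⟩ : ∃ C : NNReal, ∀ᵐ y : EuclideanSpace ℝ (Fin N) ∂volume, ‖a y‖₊ ≤ C := by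
    have h := ha.2
    rw [eLpNorm_exponent_top] at h
    exact eLpNormEssSup_lt_top_iff_isBoundedUnder.mp h
  obtain ⟨Cb, hCb⟩ : ∃ C : NNReal, ∀ᵐ y : EuclideanSpace ℝ (Fin N) ∂volume, ‖b y‖₊ ≤ C := by
    have h := hb.2
    rw [eLpNorm_exponent_top] at h
    exact eLpNormEssSup_lt_top_iff_isBoundedUnder.mp h
  have hvol : (volume : Measure (EuclideanSpace ℝ (Fin N))) ≠ 0 := by
    intro h
    have := measure_ball_pos (volume : Measure (EuclideanSpace ℝ (Fin N))) (0 : EuclideanSpace ℝ (Fin N)) one_pos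
    rw [h] at this
    simp at this
  have hae : (ae (volume : Measure (EuclideanSpace ℝ (Fin N)))).NeBot := ae_neBot.mpr hvol
  -- key: b ≤ aHat a.e.
  have key : ∀ᵐ y : EuclideanSpace ℝ (Fin N) ∂volume, b y ≤ aHat := by
    by_contra hcon
    set b' := hb.aestronglyMeasurable.mk b with hb'def
    have hb'sm : StronglyMeasurable b' := hb.aestronglyMeasurable.stronglyMeasurable_mk
    have hbb' : b =ᵐ[volume] b' := hb.aestronglyMeasurable.ae_eq_mk
    have hcon' : ¬ ∀ᵐ y : EuclideanSpace ℝ (Fin N) ∂volume, b' y ≤ aHat := by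
      intro h
      exact hcon ((h.and hbb').mono fun y hy => hy.2 ▸ hy.1)
    -- find a positive-measure bounded set where b' ≥ aHat + ε
    have hTpos : volume {y : EuclideanSpace ℝ (Fin N) | aHat < b' y} ≠ 0 := by
      intro h0
      exact hcon' (by simpa [ae_iff, not_le] using h0)
    obtain ⟨k, hk⟩ : ∃ k : ℕ, volume ({y : EuclideanSpace ℝ (Fin N) | aHat + 1/(k+1) ≤ b' y}
        ∩ ball (0 : EuclideanSpace ℝ (Fin N)) (k+1)) ≠ 0 := by
      by_contra hall
      push_neg at hall
      apply hTpos
      refine measure_mono_null ?_ (measure_iUnion_null hall)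
      intro y hy
      obtain ⟨k₁, hk₁⟩ := exists_nat_one_div_lt (K := ℝ) (sub_pos.mpr hy)
      refine Set.mem_iUnion.mpr ⟨max k₁ ⌈‖y‖⌉₊, ⟨?_, ?_⟩⟩
      · have h1 : (1:ℝ)/(max k₁ ⌈‖y‖⌉₊ + 1) ≤ 1/(k₁+1) := by
          apply one_div_le_one_div_of_le
          · positivity
          · push_cast
            have := le_max_left k₁ ⌈‖y‖⌉₊
            exact_mod_cast Nat.add_le_add_right this 1
        simp only [Set.mem_setOf_eq]
        linarith
      · rw [mem_ball_zero_iff]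
        push_cast
        have h2 : ‖y‖ ≤ (⌈‖y‖⌉₊ : ℝ) := Nat.le_ceil _
        have h3 : (⌈‖y‖⌉₊ : ℝ) ≤ max (k₁ : ℝ) (⌈‖y‖⌉₊ : ℝ) := le_max_right _ _
        linarith
    set ε : ℝ := 1/(k+1) with hεdef
    have hε : 0 < ε := by positivity
    set S : Set (EuclideanSpace ℝ (Fin N)) :=
      {y | aHat + 1/(k+1) ≤ b' y} ∩ ball (0 : EuclideanSpace ℝ (Fin N)) (k+1) with hSdef
    have hS : MeasurableSet S :=
      (measurableSet_le measurable_const hb'sm.measurable).inter measurableSet_ball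
    have hSfin : volume S < ⊤ :=
      lt_of_le_of_lt (measure_mono Set.inter_subset_right) measure_ball_lt_top
    have hSb : S ⊆ ball (0 : EuclideanSpace ℝ (Fin N)) (k+1) := Set.inter_subset_right
    haveI : IsFiniteMeasure (volume.restrict S) :=
      ⟨by rwa [Measure.restrict_apply_univ]⟩
    set φ : EuclideanSpace ℝ (Fin N) → ℝ := S.indicator (fun _ => (1:ℝ)) with hφdef
    have hφ : Integrable φ volume := by
      rw [hφdef, integrable_indicator_iff hS]
      exact integrableOn_const hSfin.ne
    have hmul : ∀ f : EuclideanSpace ℝ (Fin N) → ℝ,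
        (fun y => f y * φ y) = S.indicator f := by
      intro f
      funext y
      by_cases h : y ∈ S <;>
        simp [hφdef, Set.indicator_of_mem, Set.indicator_of_notMem, h]
    have htend : Tendsto (fun n => ∫ y in S, a (y - x n)) atTop (𝓝 (∫ y in S, b y)) := by
      have h := hconv φ hφ
      simp only [hmul, integral_indicator hS] at h
      exact h
    -- integrability of b on S
    have hbint : IntegrableOn b S volume := (hb.restrict S).integrable le_top
    -- lower bound
    have hlow : (aHat + ε) * (volume S).toReal ≤ ∫ y in S, b y := by
      have h1 : ∫ y in S, b y = ∫ y in S, b' y :=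
        integral_congr_ae (ae_restrict_of_ae hbb')
      rw [h1]
      have h2 := setIntegral_ge_of_const_le hS hSfin.ne (fun y hy => hy.1)
        (hbint.congr (ae_restrict_of_ae hbb'))
      rw [smul_eq_mul, mul_comm] at h2
      exact h2
    -- upper bounds
    have hm : ∀ R : ℝ, ∫ y in S, b y ≤
        (essSup a (volume.restrict (ball (0 : EuclideanSpace ℝ (Fin N)) R)ᶜ)) *
          (volume S).toReal := by
      intro R
      set m := essSup a (volume.restrict (ball (0 : EuclideanSpace ℝ (Fin N)) R)ᶜ) with hmdef
      refine le_of_tendsto htend ?_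
      filter_upwards [hx.eventually_ge_atTop (R + (k+1))] with n hn
      have hT : MeasurePreserving (fun y : EuclideanSpace ℝ (Fin N) => y - x n) volume volume :=
        measurePreserving_sub_right volume (x n)
      have hbound : IsBoundedUnder (· ≤ ·)
          (ae (volume.restrict (ball (0 : EuclideanSpace ℝ (Fin N)) R)ᶜ)) a := by
        refine ⟨(Ca : ℝ), eventually_map.mpr (ae_restrict_of_ae (hCa.mono fun y hy => ?_))⟩
        have : ‖a y‖ ≤ (Ca : ℝ) := hy
        exact le_trans (le_abs_self _) this
      have hA : ∀ᵐ y ∂(volume.restrict (ball (0 : EuclideanSpace ℝ (Fin N)) R)ᶜ), a y ≤ m :=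
        ae_le_essSup hbound
      have hA' : ∀ᵐ y : EuclideanSpace ℝ (Fin N) ∂volume,
          y ∈ (ball (0 : EuclideanSpace ℝ (Fin N)) R)ᶜ → a y ≤ m :=
        (ae_restrict_iff' measurableSet_ball.compl).mp hA
      have hA'' : ∀ᵐ y : EuclideanSpace ℝ (Fin N) ∂volume,
          (y - x n) ∈ (ball (0 : EuclideanSpace ℝ (Fin N)) R)ᶜ → a (y - x n) ≤ m :=
        hT.quasiMeasurePreserving.tendsto_ae.eventually hA'
      have hAS : ∀ᵐ y ∂(volume.restrict S), a (y - x n) ≤ m := by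
        refine (ae_restrict_iff' hS).mpr ?_
        filter_upwards [hA''] with y hy hyS
        apply hy
        simp only [Set.mem_compl_iff, mem_ball_zero_iff, not_lt]
        have h1 : ‖y‖ < (k:ℝ)+1 := mem_ball_zero_iff.mp (hSb hyS)
        have h2 : ‖x n‖ - ‖y‖ ≤ ‖y - x n‖ := by
          rw [norm_sub_rev]
          exact norm_sub_norm_le _ _
        linarith
      have hsm : AEStronglyMeasurable (fun y : EuclideanSpace ℝ (Fin N) => a (y - x n)) volume :=
        ha.aestronglyMeasurable.comp_quasiMeasurePreserving hT.quasiMeasurePreserving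
      have hbnd : ∀ᵐ y : EuclideanSpace ℝ (Fin N) ∂volume, ‖a (y - x n)‖ ≤ (Ca : ℝ) :=
        (hT.quasiMeasurePreserving.tendsto_ae.eventually hCa).mono fun y hy => hy
      have hint : IntegrableOn (fun y => a (y - x n)) S volume :=
        ((memLp_top_of_bound hsm _ hbnd).restrict S).integrable le_top
      calc ∫ y in S, a (y - x n) ≤ ∫ _y in S, m :=
            integral_mono_ae hint (integrable_const m) hAS
        _ = m * (volume S).toReal := by
            rw [setIntegral_const, smul_eq_mul, mul_comm, Measure.real]
    have hup : ∫ y in S, b y ≤ aHat * (volume S).toReal :=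
      ge_of_tendsto (hahat.mul_const _) (Eventually.of_forall hm)
    have hpos : 0 < (volume S).toReal := ENNReal.toReal_pos hk hSfin.ne
    nlinarith [hlow, hup, hpos, hε]
  -- conclude
  have hcb : IsCoboundedUnder (· ≤ ·) (ae (volume : Measure (EuclideanSpace ℝ (Fin N)))) b := by
    refine IsBoundedUnder.isCoboundedUnder_le ⟨-(Cb : ℝ), eventually_map.mpr ?_⟩
    filter_upwards [hCb] with y hy
    have : |b y| ≤ (Cb : ℝ) := by
      simpa [Real.norm_eq_abs, ← NNReal.coe_le_coe] using hy
    linarith [abs_le.mp this |>.1]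
  exact limsup_le_of_le hcb key
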